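/- For all integers n > r ≥ 1, the map ∂ : 𝒮_r → 𝒬(n)_r is a bijection. -/

import Mathlib

/-!
Statement 13: for `n > r ≥ 1`, the map `∂ : 𝒮_r → 𝒬(n)_r` is a bijection.

A multisegment is modelled as a finite multiset of pairs `(a,k) ∈ ℂ × ℕ`
(center `a ≠ 0`, length `k ≥ 1`) whose lengths sum to `r`.  We state the
bijectivity as: `∂` maps `𝒮_r` into `𝒬(n)_r`, is injective on `𝒮_r`, and every
member of `𝒬(n)_r` is hit.
-/

open Polynomial

/-- Substitution `u ↦ c·u` in a polynomial: `(scaleX c Q)(u) = Q(c·u)`. -/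
noncomputable def scaleX (c : ℂ) (Q : Polynomial ℂ) : Polynomial ℂ :=
  Q.comp (C c * X)

/-- `P_i(u) = ∏_{(a,k) ∈ 𝐬, k = i} (1 − a·u)` (product with multiplicity). -/
noncomputable def segP (s : Multiset (ℂ × ℕ)) (i : ℕ) : Polynomial ℂ :=
  ((s.filter (fun p => p.2 = i)).map (fun p => 1 - C p.1 * X)).prod

/-- `Q_i(u) = P_i(q^{1−i}u)·P_{i+1}(q^{2−i}u)⋯P_{n−1}(q^{n−2i}u)` (and `Q_n = 1`). -/
noncomputable def segQ (q : ℂ) (n : ℕ) (s : Multiset (ℂ × ℕ)) (i : ℕ) :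
    Polynomial ℂ :=
  ∏ k ∈ Finset.Ico i n, scaleX (q ^ ((k : ℤ) - 2 * (i : ℤ) + 1)) (segP s k)

lemma scaleX_mul (c : ℂ) (P Q : Polynomial ℂ) :
    scaleX c (P * Q) = scaleX c P * scaleX c Q := mul_comp P Q _

lemma scaleX_one (c : ℂ) : scaleX c (1 : Polynomial ℂ) = 1 := one_comp

lemma scaleX_scaleX (c d : ℂ) (P : Polynomial ℂ) :
    scaleX c (scaleX d P) = scaleX (d * c) P := by
  unfold scaleX
  rw [comp_assoc]
  congr 1
  simp [mul_comp, C_comp, X_comp, mul_assoc]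

lemma scaleX_one_c (P : Polynomial ℂ) : scaleX 1 P = P := by
  simp [scaleX]

lemma scaleX_coeff_zero (c : ℂ) (P : Polynomial ℂ) :
    (scaleX c P).coeff 0 = P.coeff 0 := by
  simp [scaleX, coeff_zero_eq_eval_zero, eval_comp]

lemma scaleX_natDegree {c : ℂ} (hc : c ≠ 0) (P : Polynomial ℂ) :
    (scaleX c P).natDegree = P.natDegree := by
  unfold scaleX
  rw [natDegree_comp]
  have : (C c * X).natDegree = 1 := by
    simpa using natDegree_C_mul_X c hc
  simp [this]

lemma scaleX_prod {α : Type*} (c : ℂ) (t : Finset α) (f : α → Polynomial ℂ) :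
    scaleX c (∏ k ∈ t, f k) = ∏ k ∈ t, scaleX c (f k) := by
  classical
  induction t using Finset.induction with
  | empty => simp [scaleX_one]
  | insert _ _ h ih => simp [Finset.prod_insert h, scaleX_mul, ih]

noncomputable def segT (q : ℂ) (n : ℕ) (s : Multiset (ℂ × ℕ)) (i : ℕ) :
    Polynomial ℂ :=
  ∏ k ∈ Finset.Ico i n, scaleX (q ^ ((k : ℤ) - i)) (segP s k)

lemma segQ_eq {q : ℂ} (hq : q ≠ 0) (n : ℕ) (s : Multiset (ℂ × ℕ)) (i : ℕ) :
    segQ q n s i = scaleX (q ^ (1 - (i : ℤ))) (segT q n s i) := by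
  unfold segQ segT
  rw [scaleX_prod]
  apply Finset.prod_congr rfl
  intro k _
  rw [scaleX_scaleX, ← zpow_add₀ hq]
  ring_nf

lemma segT_eq {q : ℂ} (hq : q ≠ 0) (n : ℕ) (s : Multiset (ℂ × ℕ)) (i : ℕ) :
    segT q n s i = scaleX (q ^ ((i : ℤ) - 1)) (segQ q n s i) := by
  rw [segQ_eq hq, scaleX_scaleX, ← zpow_add₀ hq]
  norm_num [scaleX_one_c]

lemma segT_top (q : ℂ) (n : ℕ) (s : Multiset (ℂ × ℕ)) : segT q n s n = 1 := by
  simp [segT]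

lemma segT_succ (q : ℂ) (hq : q ≠ 0) {n i : ℕ} (hi : i < n)
    (s : Multiset (ℂ × ℕ)) :
    segT q n s i = segP s i * scaleX q (segT q n s (i + 1)) := by
  unfold segT
  rw [Finset.prod_eq_prod_Ico_succ_bot hi, scaleX_prod]
  congr 1
  · simp [scaleX_one_c]
  · apply Finset.prod_congr rfl
    intro k hk
    rw [scaleX_scaleX]
    have : q ^ ((k:ℤ) - ((i+1:ℕ):ℤ)) * q = q ^ ((k:ℤ) - (i:ℤ)) := by
      rw [mul_comm, ← zpow_one_add₀ hq]
      congr 1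
      push_cast
      ring
    rw [this]

lemma prod_coeff_zero_one (m : Multiset (Polynomial ℂ)) (h : ∀ p ∈ m, p.coeff 0 = 1) :
    m.prod.coeff 0 = 1 := by
  induction m using Multiset.induction with
  | empty => simp
  | cons a t ih =>
    rw [Multiset.prod_cons, mul_coeff_zero, h a (Multiset.mem_cons_self a t),
      ih (fun p hp => h p (Multiset.mem_cons_of_mem hp))]
    ring

lemma prod_one_sub_coeff_zero (m : Multiset ℂ) :
    ((m.map fun a => 1 - C a * X).prod).coeff 0 = 1 := by
  apply prod_coeff_zero_one
  intro p hp
  obtain ⟨a, _, rfl⟩ := Multiset.mem_map.1 hp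
  simp

lemma segP_coeff_zero (s : Multiset (ℂ × ℕ)) (i : ℕ) :
    (segP s i).coeff 0 = 1 := by
  apply prod_coeff_zero_one
  intro p hp
  obtain ⟨a, _, rfl⟩ := Multiset.mem_map.1 hp
  simp
lemma segP_ne_zero (s : Multiset (ℂ × ℕ)) (i : ℕ) : segP s i ≠ 0 := by
  intro h
  have := segP_coeff_zero s i
  rw [h] at this
  simp at this

lemma segT_coeff_zero (q : ℂ) (n : ℕ) (s : Multiset (ℂ × ℕ)) (i : ℕ) :
    (segT q n s i).coeff 0 = 1 := by
  unfold segT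
  rw [coeff_zero_eq_eval_zero, eval_prod]
  apply Finset.prod_eq_one
  intro k _
  rw [← coeff_zero_eq_eval_zero, scaleX_coeff_zero, segP_coeff_zero]

lemma segT_ne_zero (q : ℂ) (n : ℕ) (s : Multiset (ℂ × ℕ)) (i : ℕ) :
    segT q n s i ≠ 0 := by
  intro h
  have := segT_coeff_zero q n s i
  rw [h] at this
  simp at this

lemma roots_prod_one_sub (m : Multiset ℂ) (hm : ∀ a ∈ m, a ≠ 0) :
    ((m.map fun a => 1 - C a * X).prod).roots = m.map (·⁻¹) := by
  induction m using Multiset.induction with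
  | empty => simp
  | cons a t ih =>
    have ha : a ≠ 0 := hm a (Multiset.mem_cons_self a t)
    rw [Multiset.map_cons, Multiset.prod_cons, Multiset.map_cons]
    have h1 : (1 - C a * X : Polynomial ℂ) = C (-a) * (X - C a⁻¹) := by
      rw [mul_sub, ← C_mul]
      field_simp
      simp only [C_neg, C_1]
      ring
    have hne : (1 - C a * X : Polynomial ℂ) ≠ 0 := by
      intro h
      have : (1 - C a * X : Polynomial ℂ).coeff 0 = 1 := by simp
      rw [h] at this; simp at this
    have hne2 : ((t.map fun a => 1 - C a * X).prod) ≠ 0 := by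
      intro h
      have := prod_one_sub_coeff_zero t
      rw [h] at this; simp at this
    rw [roots_mul (mul_ne_zero hne hne2), ih (fun a ha => hm a (Multiset.mem_cons_of_mem ha)),
      h1, roots_C_mul _ (by simpa using ha), roots_X_sub_C]
    rfl

lemma multiset_eq_of_prod_eq (m₁ m₂ : Multiset ℂ) (h1 : ∀ a ∈ m₁, a ≠ 0)
    (h2 : ∀ a ∈ m₂, a ≠ 0)
    (h : (m₁.map fun a => 1 - C a * X).prod = (m₂.map fun a => 1 - C a * X).prod) :
    m₁ = m₂ := by
  have := roots_prod_one_sub m₁ h1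
  rw [h, roots_prod_one_sub m₂ h2] at this
  have h3 : (m₂.map (·⁻¹)).map (·⁻¹) = (m₁.map (·⁻¹)).map (·⁻¹) := by rw [this]
  simpa [Multiset.map_map, Function.comp, inv_inv, Multiset.map_id'] using h3.symm

lemma exists_factorization (P : Polynomial ℂ) (hP : P.coeff 0 = 1) :
    ∃ m : Multiset ℂ, (∀ a ∈ m, a ≠ 0) ∧
      P = (m.map fun a => 1 - C a * X).prod := by
  have hP0 : P ≠ 0 := by intro h; rw [h] at hP; simp at hP
  have hroots : ∀ z ∈ P.roots, z ≠ 0 := by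
    intro z hz h0
    have := (mem_roots hP0).1 hz
    rw [h0] at this
    rw [IsRoot, ← coeff_zero_eq_eval_zero, hP] at this
    exact one_ne_zero this
  refine ⟨P.roots.map (·⁻¹), ?_, ?_⟩
  · intro a ha
    obtain ⟨z, hz, rfl⟩ := Multiset.mem_map.1 ha
    exact inv_ne_zero (hroots z hz)
  · have hsp := Splits.eq_prod_roots (IsAlgClosed.splits P)
    rw [Multiset.map_map]
    show P = (P.roots.map fun z => 1 - C z⁻¹ * X).prod
    have hcongr : P.roots.map (fun z => X - C z)
        = P.roots.map (fun z => C (-z) * (1 - C z⁻¹ * X)) := by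
      apply Multiset.map_congr rfl
      intro z hz
      have hz0 := hroots z hz
      rw [mul_sub, ← mul_assoc, ← C_mul,
        show -z * z⁻¹ = -1 by field_simp]
      simp [C_neg]
      ring
    rw [hcongr, Multiset.prod_map_mul] at hsp
    have hce : (P.roots.map fun z => C (-z)).prod = C ((P.roots.map fun z => -z).prod) := by
      rw [map_multiset_prod (C : ℂ →+* ℂ[X]), Multiset.map_map]
      rfl
    rw [hce, ← mul_assoc, ← C_mul] at hsp
    have hGc : ((P.roots.map fun z => 1 - C z⁻¹ * X).prod).coeff 0 = 1 := by
      apply prod_coeff_zero_one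
      intro p hp
      obtain ⟨z, _, rfl⟩ := Multiset.mem_map.1 hp
      simp
    have h1 := congrArg (fun p => p.coeff 0) hsp
    simp only [hP, mul_coeff_zero, coeff_C_zero, hGc, mul_one] at h1
    conv_lhs => rw [hsp]
    rw [← h1]
    simp

lemma segP_natDegree (s : Multiset (ℂ × ℕ)) (hs : ∀ p ∈ s, p.1 ≠ 0) (i : ℕ) :
    (segP s i).natDegree = (s.filter (fun p => p.2 = i)).card := by
  unfold segP
  rw [natDegree_multiset_prod]
  · rw [Multiset.map_map]
    have : ∀ p ∈ s.filter (fun p => p.2 = i),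
        (natDegree ∘ fun p : ℂ × ℕ => 1 - C p.1 * X) p = 1 := by
      intro p hp
      have hp1 : p.1 ≠ 0 := hs p (Multiset.mem_of_mem_filter hp)
      have : (1 - C p.1 * X : Polynomial ℂ) = C (-p.1) * X + C 1 := by
        simp [C_neg]
        ring
      simp only [Function.comp_apply, this]
      exact natDegree_linear (by simpa using hp1)
    rw [Multiset.map_congr rfl this]
    simp [Multiset.map_const']
  · intro h
    obtain ⟨p, hp, hp0⟩ := Multiset.mem_map.1 h
    have : (1 - C p.1 * X : Polynomial ℂ).coeff 0 = 1 := by simp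
    rw [hp0] at this
    simp at this

lemma segT_natDegree {q : ℂ} (hq : q ≠ 0) (n : ℕ) (s : Multiset (ℂ × ℕ))
    (hs : ∀ p ∈ s, p.1 ≠ 0) (i : ℕ) :
    (segT q n s i).natDegree
      = ∑ k ∈ Finset.Ico i n, (s.filter (fun p => p.2 = k)).card := by
  unfold segT
  rw [natDegree_prod]
  · apply Finset.sum_congr rfl
    intro k _
    rw [scaleX_natDegree (zpow_ne_zero _ hq), segP_natDegree s hs]
  · intro k _
    intro h
    have := scaleX_coeff_zero (q ^ ((k : ℤ) - i)) (segP s k)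
    rw [h, segP_coeff_zero] at this
    simp at this

lemma sum_swap_deg (n : ℕ) (c : ℕ → ℕ) :
    ∑ i ∈ Finset.Icc 1 n, ∑ k ∈ Finset.Ico i n, c k
      = ∑ k ∈ Finset.Ico 1 n, k * c k := by
  have h1 : ∀ i ∈ Finset.Icc 1 n, ∑ k ∈ Finset.Ico i n, c k
      = ∑ k ∈ Finset.Ico 1 n, if i ≤ k then c k else 0 := by
    intro i hi
    rw [← Finset.sum_filter]
    apply Finset.sum_congr _ (fun _ _ => rfl)
    ext k
    simp only [Finset.mem_Ico, Finset.mem_filter, Finset.mem_Icc] at *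
    omega
  rw [Finset.sum_congr rfl h1, Finset.sum_comm]
  apply Finset.sum_congr rfl
  intro k hk
  rw [← Finset.sum_filter]
  have : (Finset.Icc 1 n).filter (fun i => i ≤ k) = Finset.Icc 1 k := by
    ext i
    simp only [Finset.mem_Ico, Finset.mem_filter, Finset.mem_Icc] at *
    omega
  rw [this, Finset.sum_const, Nat.card_Icc]
  simp [mul_comm]

lemma map_snd_sum (n : ℕ) (s : Multiset (ℂ × ℕ))
    (hs : ∀ p ∈ s, 1 ≤ p.2 ∧ p.2 < n) :
    ∑ k ∈ Finset.Ico 1 n, k * (s.filter (fun p => p.2 = k)).card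
      = (s.map Prod.snd).sum := by
  induction s using Multiset.induction with
  | empty => simp
  | cons a t ih =>
    have ha := hs a (Multiset.mem_cons_self a t)
    have ht := fun p hp => hs p (Multiset.mem_cons_of_mem hp)
    simp only [Multiset.map_cons, Multiset.sum_cons]
    rw [← ih ht]
    have hf : ∀ k, (Multiset.filter (fun p => p.2 = k) (a ::ₘ t)).card
        = (if a.2 = k then 1 else 0) + (Multiset.filter (fun p => p.2 = k) t).card := by
      intro k
      rw [Multiset.filter_cons]
      by_cases h : a.2 = k <;> simp [h, Nat.add_comm]
    simp only [hf, Nat.mul_add]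
    rw [Finset.sum_add_distrib]
    congr 1
    have : ∀ k ∈ Finset.Ico 1 n, k * (if a.2 = k then 1 else 0)
        = if a.2 = k then k else 0 := by
      intro k _
      by_cases h : a.2 = k <;> simp [h, Nat.add_comm]
    rw [Finset.sum_congr rfl this, Finset.sum_ite_eq]
    simp only [Finset.mem_Ico]
    rw [if_pos ⟨ha.1, ha.2⟩]

lemma segP_eq_one (s : Multiset (ℂ × ℕ)) {k : ℕ}
    (h : ∀ p ∈ s, p.2 ≠ k) : segP s k = 1 := by
  unfold segP
  have : s.filter (fun p => p.2 = k) = 0 := by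
    rw [Multiset.filter_eq_nil]
    exact h
  rw [this]
  simp

lemma snd_lt_of_sum {r n : ℕ} (hnr : r < n) (s : Multiset (ℂ × ℕ))
    (hsum : (s.map Prod.snd).sum = r) {p : ℂ × ℕ} (hp : p ∈ s) : p.2 < n := by
  have : p.2 ≤ (s.map Prod.snd).sum :=
    Multiset.single_le_sum (fun x _ => Nat.zero_le x) _
      (Multiset.mem_map_of_mem Prod.snd hp)
  omega

lemma seg_eq_of_segP_eq (s₁ s₂ : Multiset (ℂ × ℕ))
    (h1 : ∀ p ∈ s₁, p.1 ≠ 0) (h2 : ∀ p ∈ s₂, p.1 ≠ 0)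
    (h : ∀ k, segP s₁ k = segP s₂ k) : s₁ = s₂ := by
  have key : ∀ k, s₁.filter (fun p => p.2 = k) = s₂.filter (fun p => p.2 = k) := by
    intro k
    have hmap : (s₁.filter (fun p => p.2 = k)).map Prod.fst
        = (s₂.filter (fun p => p.2 = k)).map Prod.fst := by
      apply multiset_eq_of_prod_eq
      · intro a ha
        obtain ⟨p, hp, rfl⟩ := Multiset.mem_map.1 ha
        exact h1 p (Multiset.mem_of_mem_filter hp)
      · intro a ha
        obtain ⟨p, hp, rfl⟩ := Multiset.mem_map.1 ha
        exact h2 p (Multiset.mem_of_mem_filter hp)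
      · have := h k
        unfold segP at this
        simpa [Multiset.map_map, Function.comp] using this
    have recon : ∀ s : Multiset (ℂ × ℕ),
        ((s.filter (fun p => p.2 = k)).map Prod.fst).map (fun a => (a, k))
          = s.filter (fun p => p.2 = k) := by
      intro s
      rw [Multiset.map_map]
      have : ∀ p ∈ s.filter (fun p => p.2 = k),
          ((fun a => (a, k)) ∘ Prod.fst) p = id p := by
        intro p hp
        have := (Multiset.mem_filter.1 hp).2
        simp only [Function.comp_apply, id]
        exact Prod.ext rfl this.symm
      rw [Multiset.map_congr rfl this, Multiset.map_id]
    rw [← recon s₁, ← recon s₂, hmap]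
  ext p
  calc s₁.count p = (s₁.filter (fun x => x.2 = p.2)).count p := by
        rw [Multiset.count_filter, if_pos rfl]
    _ = (s₂.filter (fun x => x.2 = p.2)).count p := by rw [key p.2]
    _ = s₂.count p := by rw [Multiset.count_filter, if_pos rfl]

lemma segP_add (s t : Multiset (ℂ × ℕ)) (k : ℕ) :
    segP (s + t) k = segP s k * segP t k := by
  unfold segP
  rw [Multiset.filter_add, Multiset.map_add, Multiset.prod_add]

lemma segP_map_pair (m : Multiset ℂ) (j k : ℕ) :
    segP (m.map (fun a => (a, j))) k
      = if j = k then (m.map fun a => 1 - C a * X).prod else 1 := by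
  unfold segP
  rw [Multiset.filter_map]
  by_cases h : j = k
  · subst h
    rw [if_pos rfl]
    have : m.filter ((fun p : ℂ × ℕ => p.2 = j) ∘ (fun a => (a, j))) = m := by
      apply Multiset.filter_eq_self.2
      intro a _
      simp
    rw [this, Multiset.map_map]
    rfl
  · rw [if_neg h]
    have : m.filter ((fun p : ℂ × ℕ => p.2 = k) ∘ (fun a => (a, j))) = 0 := by
      apply Multiset.filter_eq_nil.2
      intro a _
      simpa using h
    rw [this]
    simp

lemma segT_congr {q : ℂ} {n : ℕ} {s t : Multiset (ℂ × ℕ)} (i : ℕ)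
    (h : ∀ k, i ≤ k → k < n → segP s k = segP t k) :
    segT q n s i = segT q n t i := by
  unfold segT
  apply Finset.prod_congr rfl
  intro k hk
  rw [h k (Finset.mem_Ico.1 hk).1 (Finset.mem_Ico.1 hk).2]

lemma ne_zero_of_coeff_zero_one {P : Polynomial ℂ} (h : P.coeff 0 = 1) :
    P ≠ 0 := by
  intro h0
  rw [h0] at h
  simp at h

lemma scaleX_pow_pow {q : ℂ} (hq : q ≠ 0) (a b : ℤ) (P : Polynomial ℂ) :
    scaleX (q ^ b) (scaleX (q ^ a) P) = scaleX (q ^ (a + b)) P := by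
  rw [scaleX_scaleX, zpow_add₀ hq]

lemma q_pow_cast (q : ℂ) (c : ℕ) : q ^ c = q ^ (c : ℤ) := (zpow_natCast q c).symm

lemma deg_sum {q : ℂ} (hq : q ≠ 0) (n : ℕ) (s : Multiset (ℂ × ℕ))
    (hs : ∀ p ∈ s, p.1 ≠ 0 ∧ 1 ≤ p.2 ∧ p.2 < n) :
    (∑ i ∈ Finset.Icc 1 n, (segQ q n s i).natDegree) = (s.map Prod.snd).sum := by
  have h1 : ∀ i ∈ Finset.Icc 1 n, (segQ q n s i).natDegree
      = ∑ k ∈ Finset.Ico i n, (s.filter (fun p => p.2 = k)).card := by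
    intro i _
    rw [segQ_eq hq, scaleX_natDegree (zpow_ne_zero _ hq),
      segT_natDegree hq n s (fun p hp => (hs p hp).1)]
  rw [Finset.sum_congr rfl h1, sum_swap_deg,
    map_snd_sum n s (fun p hp => ⟨(hs p hp).2.1, (hs p hp).2.2⟩)]

lemma surj_aux {q : ℂ} (hq : q ≠ 0) (n : ℕ) (Q : ℕ → Polynomial ℂ)
    (hQc : ∀ i, 1 ≤ i → i ≤ n → (Q i).coeff 0 = 1)
    (hQn : Q n = 1)
    (hdom : ∀ i, 1 ≤ i → i + 1 ≤ n →
      scaleX q (scaleX (q ^ (i : ℤ)) (Q (i + 1))) ∣ scaleX (q ^ ((i : ℤ) - 1)) (Q i)) :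
    ∀ m : ℕ, m < n → ∃ s : Multiset (ℂ × ℕ),
      (∀ p ∈ s, p.1 ≠ 0 ∧ n - m ≤ p.2 ∧ p.2 < n) ∧
      ∀ i, n - m ≤ i → i ≤ n → segT q n s i = scaleX (q ^ ((i : ℤ) - 1)) (Q i) := by
  intro m
  induction m with
  | zero =>
    intro _
    refine ⟨0, by simp, ?_⟩
    intro i hi hi2
    have : i = n := le_antisymm hi2 (by simpa using hi)
    subst this
    rw [segT_top, hQn, scaleX_one]
  | succ m ih =>
    intro hm
    obtain ⟨s', hs', hT'⟩ := ih (by omega)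
    set j := n - (m + 1) with hj
    have hj1 : 1 ≤ j := by omega
    have hjn : j + 1 ≤ n := by omega
    have hjm : n - m = j + 1 := by omega
    obtain ⟨Pi, hPi⟩ := hdom j hj1 hjn
    have hPc : Pi.coeff 0 = 1 := by
      have := congrArg (fun p => p.coeff 0) hPi
      simp only [mul_coeff_zero, scaleX_coeff_zero] at this
      rw [hQc j hj1 (by omega), hQc (j + 1) (by omega) hjn] at this
      simpa using this.symm
    obtain ⟨mm, hmm0, hmmP⟩ := exists_factorization Pi hPc
    refine ⟨s' + mm.map (fun a => (a, j)), ?_, ?_⟩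
    · intro p hp
      rcases Multiset.mem_add.1 hp with h | h
      · have := hs' p h
        exact ⟨this.1, by omega, this.2.2⟩
      · obtain ⟨a, ha, rfl⟩ := Multiset.mem_map.1 h
        exact ⟨hmm0 a ha, show n - (m + 1) ≤ j by omega, show j < n by omega⟩
    · intro i hi hi2
      have hsegP : ∀ k, j + 1 ≤ k →
          segP (s' + mm.map (fun a => (a, j))) k = segP s' k := by
        intro k hk
        rw [segP_add, segP_map_pair, if_neg (by omega), mul_one]
      rcases eq_or_lt_of_le hi with he | hlt
      · -- i = j
        rw [← he, segT_succ q hq (show j < n by omega), segP_add,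
          segP_eq_one s' (fun p hp => by have := hs' p hp; omega),
          segP_map_pair, if_pos rfl, ← hmmP, one_mul,
          segT_congr (j + 1) (fun k hk _ => hsegP k hk),
          hT' (j + 1) (by omega) hjn,
          show ((j + 1 : ℕ) : ℤ) - 1 = (j : ℤ) by push_cast; ring, hPi]
        ring
      · have hji : j + 1 ≤ i := hlt
        rw [segT_congr i (fun k hk _ => hsegP k (le_trans hji hk)),
          hT' i (by omega) hi2]


theorem stmt13 (q : ℂ) (hq : q ≠ 0) (hru : ∀ m : ℕ, 1 ≤ m → q ^ m ≠ 1)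
    (n r : ℕ) (hr : 1 ≤ r) (hnr : r < n) :
    -- ∂ maps 𝒮_r into 𝒬(n)_r
    (∀ s : Multiset (ℂ × ℕ), (∀ p ∈ s, p.1 ≠ 0 ∧ 1 ≤ p.2) →
      (s.map Prod.snd).sum = r →
      (∀ i, 1 ≤ i → i ≤ n → (segQ q n s i).coeff 0 = 1) ∧
      (∑ i ∈ Finset.Icc 1 n, (segQ q n s i).natDegree) = r ∧
      (∀ i, 1 ≤ i → i ≤ n - 1 →
        scaleX (q ^ (i + 1)) (segQ q n s (i + 1)) ∣
          scaleX (q ^ (i - 1)) (segQ q n s i))) ∧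
    -- ∂ is injective on 𝒮_r
    (∀ s₁ s₂ : Multiset (ℂ × ℕ),
      (∀ p ∈ s₁, p.1 ≠ 0 ∧ 1 ≤ p.2) → (s₁.map Prod.snd).sum = r →
      (∀ p ∈ s₂, p.1 ≠ 0 ∧ 1 ≤ p.2) → (s₂.map Prod.snd).sum = r →
      (∀ i, 1 ≤ i → i ≤ n → segQ q n s₁ i = segQ q n s₂ i) → s₁ = s₂) ∧
    -- ∂ is surjective onto 𝒬(n)_r
    (∀ Q : ℕ → Polynomial ℂ,
      (∀ i, 1 ≤ i → i ≤ n → (Q i).coeff 0 = 1) →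
      (∑ i ∈ Finset.Icc 1 n, (Q i).natDegree) = r →
      (∀ i, 1 ≤ i → i ≤ n - 1 →
        scaleX (q ^ (i + 1)) (Q (i + 1)) ∣ scaleX (q ^ (i - 1)) (Q i)) →
      ∃ s : Multiset (ℂ × ℕ), (∀ p ∈ s, p.1 ≠ 0 ∧ 1 ≤ p.2) ∧
        (s.map Prod.snd).sum = r ∧
        ∀ i, 1 ≤ i → i ≤ n → segQ q n s i = Q i) := by
  have hn2 : 2 ≤ n := by omega
  refine ⟨?_, ?_, ?_⟩
  · -- into
    intro s hs hsum
    have hs' : ∀ p ∈ s, p.1 ≠ 0 ∧ 1 ≤ p.2 ∧ p.2 < n := by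
      intro p hp
      exact ⟨(hs p hp).1, (hs p hp).2, snd_lt_of_sum hnr s hsum hp⟩
    refine ⟨?_, ?_, ?_⟩
    · intro i hi1 hi2
      rw [segQ_eq hq, scaleX_coeff_zero, segT_coeff_zero]
    · rw [deg_sum hq n s hs', hsum]
    · intro i hi1 hi2
      have hin : i + 1 ≤ n := by omega
      have hL : scaleX (q ^ (i + 1)) (segQ q n s (i + 1))
          = scaleX q (segT q n s (i + 1)) := by
        rw [segQ_eq hq, q_pow_cast q (i + 1), scaleX_pow_pow hq]
        congr 1
        rw [show (1 - ((i + 1 : ℕ) : ℤ) + ((i + 1 : ℕ) : ℤ)) = 1 by ring, zpow_one]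
      have hR : scaleX (q ^ (i - 1)) (segQ q n s i) = segT q n s i := by
        rw [segQ_eq hq, q_pow_cast q (i - 1), scaleX_pow_pow hq,
          show (1 - (i : ℤ) + ((i - 1 : ℕ) : ℤ)) = 0 by omega, zpow_zero,
          scaleX_one_c]
      rw [hL, hR, segT_succ q hq (show i < n by omega)]
      exact dvd_mul_left _ _
  · -- injective
    intro s₁ s₂ h1 hsum1 h2 hsum2 hQ
    have hT : ∀ i, 1 ≤ i → i ≤ n → segT q n s₁ i = segT q n s₂ i := by
      intro i hi1 hi2
      rw [segT_eq hq, segT_eq hq, hQ i hi1 hi2]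
    have hP : ∀ k, segP s₁ k = segP s₂ k := by
      intro k
      rcases Nat.eq_zero_or_pos k with rfl | hk
      · rw [segP_eq_one s₁ (fun p hp => by have := (h1 p hp).2; omega),
          segP_eq_one s₂ (fun p hp => by have := (h2 p hp).2; omega)]
      by_cases hkn : k < n
      · have t1 := hT k hk (le_of_lt hkn)
        have t2 := hT (k + 1) (by omega) hkn
        rw [segT_succ q hq hkn, segT_succ q hq hkn, t2] at t1
        have hne : scaleX q (segT q n s₂ (k + 1)) ≠ 0 := by
          apply ne_zero_of_coeff_zero_one
          rw [scaleX_coeff_zero, segT_coeff_zero]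
        exact mul_right_cancel₀ hne t1
      · rw [segP_eq_one s₁
            (fun p hp => by have := snd_lt_of_sum hnr s₁ hsum1 hp; omega),
          segP_eq_one s₂
            (fun p hp => by have := snd_lt_of_sum hnr s₂ hsum2 hp; omega)]
    exact seg_eq_of_segP_eq s₁ s₂ (fun p hp => (h1 p hp).1)
      (fun p hp => (h2 p hp).1) hP
  · -- surjective
    intro Q hQc hdeg hdom
    have hdom' : ∀ i, 1 ≤ i → i + 1 ≤ n →
        scaleX q (scaleX (q ^ (i : ℤ)) (Q (i + 1))) ∣
          scaleX (q ^ ((i : ℤ) - 1)) (Q i) := by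
      intro i hi1 hi2
      have hd := hdom i hi1 (by omega)
      have e1 : scaleX q (scaleX (q ^ (i : ℤ)) (Q (i + 1)))
          = scaleX (q ^ (i + 1)) (Q (i + 1)) := by
        rw [scaleX_scaleX]
        congr 1
      have e2 : scaleX (q ^ (i - 1)) (Q i) = scaleX (q ^ ((i : ℤ) - 1)) (Q i) := by
        congr 1
        rw [q_pow_cast q (i - 1)]
        congr 1
        omega
      rw [e1, ← e2]
      exact hd
    have hanti : ∀ i, 1 ≤ i → i + 1 ≤ n →
        (Q (i + 1)).natDegree ≤ (Q i).natDegree := by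
      intro i hi1 hi2
      have hd := hdom' i hi1 hi2
      have hne : scaleX (q ^ ((i : ℤ) - 1)) (Q i) ≠ 0 := by
        apply ne_zero_of_coeff_zero_one
        rw [scaleX_coeff_zero, hQc i hi1 (by omega)]
      have := natDegree_le_of_dvd hd hne
      rwa [scaleX_natDegree hq, scaleX_natDegree (zpow_ne_zero _ hq),
        scaleX_natDegree (zpow_ne_zero _ hq)] at this
    have hchain : ∀ d j, 1 ≤ j → j + d ≤ n →
        (Q (j + d)).natDegree ≤ (Q j).natDegree := by
      intro d
      induction d with
      | zero => intro j _ _; simp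
      | succ d ihd =>
        intro j hj1 hjd
        calc (Q (j + (d + 1))).natDegree = (Q ((j + d) + 1)).natDegree := by
              rw [show j + (d + 1) = (j + d) + 1 by ring]
          _ ≤ (Q (j + d)).natDegree := hanti (j + d) (by omega) (by omega)
          _ ≤ (Q j).natDegree := ihd j hj1 (by omega)
    have hQn : Q n = 1 := by
      have h0 : (Q n).natDegree = 0 := by
        by_contra h
        have h1 : ∀ i ∈ Finset.Icc 1 n, 1 ≤ (Q i).natDegree := by
          intro i hi
          rw [Finset.mem_Icc] at hi
          have := hchain (n - i) i hi.1 (by omega)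
          rw [show i + (n - i) = n by omega] at this
          omega
        have hle := Finset.card_nsmul_le_sum (Finset.Icc 1 n)
          (fun i => (Q i).natDegree) 1 h1
        rw [Nat.card_Icc] at hle
        simp only [smul_eq_mul, mul_one] at hle
        omega
      have := eq_C_of_natDegree_eq_zero h0
      rw [this]
      rw [show (Q n).coeff 0 = 1 from hQc n (by omega) le_rfl, C_1]
    obtain ⟨s, hsprop, hsT⟩ := surj_aux hq n Q hQc hQn hdom' (n - 1) (by omega)
    have hs1 : ∀ p ∈ s, p.1 ≠ 0 ∧ 1 ≤ p.2 ∧ p.2 < n := by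
      intro p hp
      have := hsprop p hp
      exact ⟨this.1, by omega, this.2.2⟩
    have hQeq : ∀ i, 1 ≤ i → i ≤ n → segQ q n s i = Q i := by
      intro i hi1 hi2
      rw [segQ_eq hq, hsT i (by omega) hi2, scaleX_pow_pow hq,
        show ((i : ℤ) - 1 + (1 - (i : ℤ))) = 0 by ring, zpow_zero, scaleX_one_c]
    refine ⟨s, fun p hp => ⟨(hs1 p hp).1, (hs1 p hp).2.1⟩, ?_, hQeq⟩
    rw [← deg_sum hq n s hs1, ← hdeg]
    apply Finset.sum_congr rfl
    intro i hi
    rw [Finset.mem_Icc] at hi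
    rw [hQeq i hi.1 hi.2]
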